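/- Let n, m ≥ 2. Let Λ ⊆ S^n be a nonempty closed subset such that the open set Ω = S^n \ Λ satisfies the weak Koebe–Maskit condition and has at least two connected components, and let f : Λ → S^m be a continuous injective map with f(Λ) ≠ S^m. Then there exist a circle C in S^n, a codimension-one sphere S in S^m, and a point ξ ∈ Λ with ξ ∈ C and f(ξ) ∈ S, such that there is NO sequence of pairs (C_k, S_k), where C_k is a circle in S^n with C_k ∩ Λ ≠ ∅, S_k is a codimension-one sphere in S^m, and f(C_k ∩ Λ) ⊆ S_k, for which C_k converges to C and S_k converges to S. (This combines the paper's Lemma 4.6 and Theorem 4.1, and is the topological mechanism behind Theorem 1.1.) -/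

import Mathlib

open Metric Set

noncomputable section

/-- `Euc k` is the Euclidean space `ℝ^{k+1}`. -/
abbrev Euc (k : ℕ) : Type := EuclideanSpace ℝ (Fin (k+1))

/-- The unit sphere `S^k ⊆ ℝ^{k+1}`. -/
def unitSphere (k : ℕ) : Set (Euc k) := Metric.sphere 0 1

/-- A circle in `S^n`: the intersection of `S^n` with a 2-dimensional affine
subspace of `ℝ^{n+1}`, provided this intersection is infinite. -/
def IsCircle (n : ℕ) (C : Set (Euc n)) : Prop :=
  ∃ P : AffineSubspace ℝ (Euc n),
    Module.finrank ℝ P.direction = 2 ∧ C = unitSphere n ∩ (P : Set (Euc n)) ∧ C.Infinite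

/-- A codimension-one sphere in `S^m`: the intersection of `S^m` with an
`m`-dimensional affine subspace of `ℝ^{m+1}`, provided it is infinite. -/
def IsCodimOneSphere (m : ℕ) (S : Set (Euc m)) : Prop :=
  ∃ H : AffineSubspace ℝ (Euc m),
    Module.finrank ℝ H.direction = m ∧ S = unitSphere m ∩ (H : Set (Euc m)) ∧ S.Infinite

/-- Convergence of a sequence of subsets in the Hausdorff distance. -/
def SetsConvergeTo {X : Type*} [MetricSpace X] (K : ℕ → Set X) (L : Set X) : Prop :=
  Filter.Tendsto (fun k => Metric.hausdorffDist (K k) L) Filter.atTop (nhds 0)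

/-- `limsup` of a sequence of sets: `⋂_N closure (⋃_{k ≥ N} S_k)`. -/
def setLimsup {X : Type*} [TopologicalSpace X] (S : ℕ → Set X) : Set X :=
  ⋂ N : ℕ, closure (⋃ k ≥ N, S k)

/-- The weak Koebe–Maskit condition: for every `ε > 0`, only finitely many
connected components of `Ω` have diameter greater than `ε`. -/
def WKM {X : Type*} [MetricSpace X] (Ω : Set X) : Prop :=
  ∀ ε > 0, {U : Set X | (∃ x ∈ Ω, U = connectedComponentIn Ω x) ∧ ε < Metric.diam U}.Finite

/-- `Λ ⊆ S^n` is doubly stable if every `ξ ∈ Λ` lies on a circle `C` such that for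
every sequence of circles converging to `C` the limsup of the slices `C_k ∩ Λ`
contains at least two points. -/
def DoublyStable (n : ℕ) (Λ : Set (Euc n)) : Prop :=
  ∀ ξ ∈ Λ, ∃ C : Set (Euc n), IsCircle n C ∧ ξ ∈ C ∧
    ∀ Ck : ℕ → Set (Euc n), (∀ k, IsCircle n (Ck k)) → SetsConvergeTo Ck C →
      (setLimsup (fun k => Ck k ∩ Λ)).Nontrivial


section Helpers

variable {E : Type*} [NormedAddCommGroup E] [InnerProductSpace ℝ E]

local notation "⟪" x ", " y "⟫" => inner (𝕜 := ℝ) x y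

lemma gamma_norm_sq (c e₁ e₂ w : E) (ρ θ : ℝ)
    (he₁ : ‖e₁‖ = 1) (he₂ : ‖e₂‖ = 1) (h12 : ⟪e₁, e₂⟫ = 0) :
    ‖c + (ρ * Real.cos θ) • e₁ + (ρ * Real.sin θ) • e₂ - w‖ ^ 2
      = (‖c - w‖ ^ 2 + ρ ^ 2) + (2 * ρ * ⟪c - w, e₁⟫) * Real.cos θ
        + (2 * ρ * ⟪c - w, e₂⟫) * Real.sin θ := by
  have hx : c + (ρ * Real.cos θ) • e₁ + (ρ * Real.sin θ) • e₂ - w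
      = (c - w) + ((ρ * Real.cos θ) • e₁ + (ρ * Real.sin θ) • e₂) := by abel
  rw [hx, norm_add_sq_real, norm_add_sq_real, inner_add_right]
  simp only [real_inner_smul_right, real_inner_smul_left, h12, norm_smul, he₁, he₂,
    Real.norm_eq_abs, mul_one, mul_zero, sq_abs]
  have hs := Real.sin_sq_add_cos_sq θ
  nlinarith [hs]


lemma gamma_continuous (c e₁ e₂ : E) (ρ : ℝ) :
    Continuous (fun θ : ℝ => c + (ρ * Real.cos θ) • e₁ + (ρ * Real.sin θ) • e₂) := by
  fun_prop


/-- A superlevel set of `θ ↦ t ≤ cos (θ - φ)`, pushed through a `2π`-periodic map,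
has preconnected image (it is an arc of the circle). -/
lemma image_superlevel_preconnected (c e₁ e₂ : E) (ρ : ℝ)
    (he₁ : ‖e₁‖ = 1) (he₂ : ‖e₂‖ = 1) (h12 : ⟪e₁, e₂⟫ = 0) (w : E) (δ : ℝ) :
    IsPreconnected ((Set.range fun θ : ℝ =>
      c + (ρ * Real.cos θ) • e₁ + (ρ * Real.sin θ) • e₂) \ Metric.ball w δ) := by
  set γ : ℝ → E := fun θ => c + (ρ * Real.cos θ) • e₁ + (ρ * Real.sin θ) • e₂ with hγ
  have hcont : Continuous γ := gamma_continuous c e₁ e₂ ρ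
  have hrange : IsPreconnected (Set.range γ) := isPreconnected_range hcont
  set T : Set ℝ := {θ : ℝ | δ ≤ dist (γ θ) w} with hT
  have himg : Set.range γ \ Metric.ball w δ = γ '' T := by
    ext x
    constructor
    · rintro ⟨⟨θ, rfl⟩, hx⟩
      exact ⟨θ, by simpa [hT, Metric.mem_ball, not_lt] using hx, rfl⟩
    · rintro ⟨θ, hθ, rfl⟩
      exact ⟨⟨θ, rfl⟩, by simpa [hT, Metric.mem_ball, not_lt] using hθ⟩
  rw [himg]
  rcases le_or_gt δ 0 with hδ | hδ
  · have : T = Set.univ := eq_univ_of_forall fun θ => le_trans hδ dist_nonneg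
    rw [this, Set.image_univ]; exact hrange
  -- δ > 0
  set A : ℝ := ‖c - w‖ ^ 2 + ρ ^ 2 with hA
  set B : ℝ := 2 * ρ * ⟪c - w, e₁⟫ with hB
  set D : ℝ := 2 * ρ * ⟪c - w, e₂⟫ with hD
  have hdist : ∀ θ, dist (γ θ) w ^ 2 = A + B * Real.cos θ + D * Real.sin θ := by
    intro θ
    rw [dist_eq_norm]
    exact gamma_norm_sq c e₁ e₂ w ρ θ he₁ he₂ h12
  have hTeq : T = {θ : ℝ | δ ^ 2 ≤ A + B * Real.cos θ + D * Real.sin θ} := by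
    ext θ
    simp only [hT, Set.mem_setOf_eq, ← hdist θ]
    rw [pow_le_pow_iff_left₀ hδ.le dist_nonneg (by norm_num)]
  by_cases hBD : B = 0 ∧ D = 0
  · -- constant distance
    obtain ⟨hB0, hD0⟩ := hBD
    have : T = Set.univ ∨ T = ∅ := by
      rcases le_or_gt (δ ^ 2) A with h | h
      · left; rw [hTeq]; exact eq_univ_of_forall fun θ => by simp [hB0, hD0, h]
      · right; rw [hTeq]; ext θ; simp [hB0, hD0, not_le.2 h]
    rcases this with h | h
    · rw [h, Set.image_univ]; exact hrange
    · rw [h, Set.image_empty]; exact isPreconnected_empty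
  -- nontrivial oscillation
  set z : ℂ := ⟨B, D⟩ with hz
  have hz0 : z ≠ 0 := by
    intro h
    rw [Complex.ext_iff] at h
    simp only [hz, Complex.zero_re, Complex.zero_im] at h
    exact hBD h
  set R : ℝ := ‖z‖ with hR
  have hR0 : 0 < R := by simpa [hR] using norm_pos_iff.2 hz0
  set φ : ℝ := z.arg with hφ
  have hcosφ : Real.cos φ = B / R := by
    rw [hφ, Complex.cos_arg hz0]
  have hsinφ : Real.sin φ = D / R := by
    rw [hφ, Complex.sin_arg]
  have hkey : ∀ θ, B * Real.cos θ + D * Real.sin θ = R * Real.cos (θ - φ) := by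
    intro θ
    rw [Real.cos_sub, hcosφ, hsinφ]
    field_simp
  set t : ℝ := (δ ^ 2 - A) / R with ht
  have hTt : T = {θ : ℝ | t ≤ Real.cos (θ - φ)} := by
    rw [hTeq]; ext θ
    simp only [Set.mem_setOf_eq]
    rw [ht, div_le_iff₀ hR0]
    constructor <;> intro h <;> linarith [hkey θ]
  rcases lt_or_ge t (-1) with h1 | h1
  · have : T = Set.univ := by
      rw [hTt]; exact eq_univ_of_forall fun θ => le_trans h1.le (Real.neg_one_le_cos _)
    rw [this, Set.image_univ]; exact hrange
  rcases le_or_gt t 1 with h2 | h2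
  swap
  · have : T = ∅ := by
      rw [hTt]; ext θ; simp only [Set.mem_setOf_eq, mem_empty_iff_false, iff_false, not_le]
      exact lt_of_le_of_lt (Real.cos_le_one _) h2
    rw [this, Set.image_empty]; exact isPreconnected_empty
  -- main case : -1 ≤ t ≤ 1
  set α : ℝ := Real.arccos t with hα
  have hα0 : 0 ≤ α := Real.arccos_nonneg t
  have hαπ : α ≤ Real.pi := Real.arccos_le_pi t
  have hcosα : Real.cos α = t := Real.cos_arccos h1 h2
  have himg2 : γ '' T = γ '' (Set.Icc (φ - α) (φ + α)) := by
    apply Set.Subset.antisymm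
    · rintro x ⟨θ, hθ, rfl⟩
      set j : ℤ := round ((θ - φ) / (2 * Real.pi)) with hj
      set θ' : ℝ := θ - j * (2 * Real.pi) with hθ'def
      have hγeq : γ θ' = γ θ := by
        simp only [hγ, hθ'def, Real.cos_sub_int_mul_two_pi, Real.sin_sub_int_mul_two_pi]
      have hcos' : Real.cos (θ' - φ) = Real.cos (θ - φ) := by
        have : θ' - φ = (θ - φ) - j * (2 * Real.pi) := by ring
        rw [this, Real.cos_sub_int_mul_two_pi]
      have habs : |θ' - φ| ≤ Real.pi := by
        have hr := abs_sub_round ((θ - φ) / (2 * Real.pi))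
        have h2π : (0:ℝ) < 2 * Real.pi := by positivity
        rw [abs_le] at hr ⊢
        constructor <;> · rw [hθ'def]; rcases hr with ⟨hr1, hr2⟩; 
                          rw [div_sub' (ne_of_gt h2π), le_div_iff₀ h2π] at hr1
                          rw [div_sub' (ne_of_gt h2π), div_le_iff₀ h2π] at hr2
                          nlinarith [Real.pi_pos]
      have hθ'T : t ≤ Real.cos (θ' - φ) := by
        rw [hcos']
        rw [hTt] at hθ; exact hθ
      have : |θ' - φ| ≤ α := by
        have harc : Real.arccos (Real.cos (θ' - φ)) = |θ' - φ| := by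
          rw [← Real.cos_abs (θ' - φ)]
          exact Real.arccos_cos (abs_nonneg _) habs
        rw [← harc, hα]
        exact Real.strictAntiOn_arccos.antitoneOn
          ⟨h1, h2⟩ ⟨Real.neg_one_le_cos _, Real.cos_le_one _⟩ hθ'T
      refine ⟨θ', ?_, hγeq⟩
      rw [abs_le] at this
      exact ⟨by linarith [this.1], by linarith [this.2]⟩
    · rintro x ⟨θ, hθ, rfl⟩
      refine ⟨θ, ?_, rfl⟩
      rw [hTt]
      have habs : |θ - φ| ≤ α := by
        rw [abs_le]; exact ⟨by linarith [hθ.1], by linarith [hθ.2]⟩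
      have : Real.cos α ≤ Real.cos |θ - φ| :=
        Real.cos_le_cos_of_nonneg_of_le_pi (abs_nonneg _) hαπ habs
      rw [Real.cos_abs] at this
      rw [← hcosα]; exact this
  rw [himg2]
  exact isPreconnected_Icc.image γ hcont.continuousOn

lemma sq_eq_one_of_nonneg {x : ℝ} (h : x ^ 2 = 1) (hx : 0 ≤ x) : x = 1 := by
  have : (x - 1) * (x + 1) = 0 := by nlinarith
  rcases mul_eq_zero.1 this with h' | h'
  · linarith
  · linarith


set_option maxHeartbeats 1000000 in
lemma sphere_inter_plane_param [FiniteDimensional ℝ E]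
    (P : AffineSubspace ℝ E) (h2 : Module.finrank ℝ P.direction = 2)
    {a b : E} (haS : ‖a‖ = 1) (haP : a ∈ P) (hbS : ‖b‖ = 1) (hbP : b ∈ P) (hab : a ≠ b) :
    ∃ (c e₁ e₂ : E) (ρ : ℝ), 0 < ρ ∧ ‖e₁‖ = 1 ∧ ‖e₂‖ = 1 ∧ ⟪e₁, e₂⟫ = 0 ∧
      (Metric.sphere (0:E) 1 ∩ (P : Set E)) =
        Set.range (fun θ : ℝ => c + (ρ * Real.cos θ) • e₁ + (ρ * Real.sin θ) • e₂) := by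
  set D := P.direction with hDdef
  set c : E := a - (D.orthogonalProjectionOnto a : E) with hc
  have hcP : c ∈ P := by
    have h1 : (-(D.orthogonalProjectionOnto a : E)) ∈ D := neg_mem (D.orthogonalProjectionOnto a).2
    have := AffineSubspace.vadd_mem_of_mem_direction h1 haP
    simpa [hc, sub_eq_neg_add] using this
  have hcorth : ∀ w ∈ D, ⟪c, w⟫ = 0 := by
    intro w hw
    have h1 : c ∈ Dᗮ := Submodule.sub_starProjection_mem_orthogonal (K := D) a
    have := (Submodule.mem_orthogonal D c).1 h1 w hw
    rwa [real_inner_comm] at this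
  have hmem : ∀ x ∈ P, x - c ∈ D := by
    intro x hx
    have := AffineSubspace.vsub_mem_direction hx hcP
    simpa using this
  have hnormsq : ∀ x ∈ P, ‖x‖ ^ 2 = ‖c‖ ^ 2 + ‖x - c‖ ^ 2 := by
    intro x hx
    have hxc : x = c + (x - c) := by abel
    calc ‖x‖ ^ 2 = ‖c + (x - c)‖ ^ 2 := by rw [← hxc]
    _ = ‖c‖ ^ 2 + 2 * ⟪c, x - c⟫ + ‖x - c‖ ^ 2 := norm_add_sq_real c (x - c)
    _ = ‖c‖ ^ 2 + ‖x - c‖ ^ 2 := by rw [hcorth _ (hmem x hx)]; ring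
  have haρ : ‖a - c‖ ^ 2 = 1 - ‖c‖ ^ 2 := by
    have := hnormsq a haP; rw [haS] at this; linarith [this]
  have hbρ : ‖b - c‖ ^ 2 = 1 - ‖c‖ ^ 2 := by
    have := hnormsq b hbP; rw [hbS] at this; linarith [this]
  have hρ2pos : 0 < 1 - ‖c‖ ^ 2 := by
    rcases lt_or_eq_of_le (by positivity : (0:ℝ) ≤ ‖a - c‖ ^ 2) with h | h
    · linarith [haρ]
    · exfalso
      have ha0 : a - c = 0 := by
        have : ‖a - c‖ = 0 := by nlinarith [norm_nonneg (a - c)]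
        exact norm_eq_zero.1 this
      have hb0 : b - c = 0 := by
        have h' : ‖b - c‖ ^ 2 = 0 := by rw [hbρ, ← haρ, ← h]
        have : ‖b - c‖ = 0 := by nlinarith [norm_nonneg (b - c)]
        exact norm_eq_zero.1 this
      exact hab (by rw [sub_eq_zero] at ha0 hb0; rw [ha0, hb0])
  set ρ : ℝ := Real.sqrt (1 - ‖c‖ ^ 2) with hρdef
  have hρpos : 0 < ρ := Real.sqrt_pos.2 hρ2pos
  have hρsq : ρ ^ 2 = 1 - ‖c‖ ^ 2 := Real.sq_sqrt hρ2pos.le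
  have hD2 : Module.finrank ℝ D = 2 := h2
  set bD := (stdOrthonormalBasis ℝ D).reindex (finCongr hD2) with hbD
  set e₁ : E := (bD 0 : E) with he₁def
  set e₂ : E := (bD 1 : E) with he₂def
  have he₁D : e₁ ∈ D := (bD 0).2
  have he₂D : e₂ ∈ D := (bD 1).2
  have hon := bD.orthonormal
  have he₁ : ‖e₁‖ = 1 := by
    have := hon.1 0; rw [he₁def, Submodule.norm_coe]; exact this
  have he₂ : ‖e₂‖ = 1 := by
    have := hon.1 1; rw [he₂def, Submodule.norm_coe]; exact this
  have h12 : ⟪e₁, e₂⟫ = 0 := by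
    have := hon.2 (show (0 : Fin 2) ≠ 1 by decide)
    rw [he₁def, he₂def, ← Submodule.coe_inner]
    exact this
  refine ⟨c, e₁, e₂, ρ, hρpos, he₁, he₂, h12, ?_⟩
  apply Set.Subset.antisymm
  · -- sphere ∩ P ⊆ range γ
    rintro x ⟨hxS, hxP⟩
    have hxS' : ‖x‖ = 1 := by simpa [mem_sphere_iff_norm] using hxS
    have hwD : x - c ∈ D := hmem x hxP
    have hw2 : ‖x - c‖ ^ 2 = ρ ^ 2 := by
      have := hnormsq x hxP; rw [hxS'] at this; rw [hρsq]; linarith [this]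
    set wD : D := ⟨x - c, hwD⟩ with hwDdef
    set α : ℝ := ⟪e₁, x - c⟫ with hα
    set β : ℝ := ⟪e₂, x - c⟫ with hβ
    have hrepr : x - c = α • e₁ + β • e₂ := by
      have h0 := bD.sum_repr wD
      rw [Fin.sum_univ_two] at h0
      have h1 := congrArg (Subtype.val : D → E) h0
      rw [bD.repr_apply_apply, bD.repr_apply_apply] at h1
      simp only [Submodule.coe_add, Submodule.coe_smul] at h1
      rw [Submodule.coe_inner, Submodule.coe_inner] at h1
      exact h1.symm
    have hαβ : α ^ 2 + β ^ 2 = ρ ^ 2 := by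
      have : ‖α • e₁ + β • e₂‖ ^ 2 = α ^ 2 + β ^ 2 := by
        rw [norm_add_sq_real, real_inner_smul_left, real_inner_smul_right, h12,
          norm_smul, norm_smul, he₁, he₂, Real.norm_eq_abs, Real.norm_eq_abs]
        simp [sq_abs]
      rw [← hw2, hrepr, this]
    have hz0 : (⟨α, β⟩ : ℂ) ≠ 0 := by
      intro h
      rw [Complex.ext_iff] at h
      simp only [Complex.zero_re, Complex.zero_im] at h
      rw [h.1, h.2] at hαβ
      nlinarith [hρpos]
    have habs : ‖(⟨α, β⟩ : ℂ)‖ = ρ := by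
      rw [Complex.norm_def, Complex.normSq_mk]
      have : α * α + β * β = ρ ^ 2 := by nlinarith [hαβ]
      rw [this, Real.sqrt_sq hρpos.le]
    refine ⟨Complex.arg ⟨α, β⟩, ?_⟩
    have hcosθ : ρ * Real.cos (Complex.arg ⟨α, β⟩) = α := by
      rw [Complex.cos_arg hz0, habs]
      field_simp
    have hsinθ : ρ * Real.sin (Complex.arg ⟨α, β⟩) = β := by
      rw [Complex.sin_arg, habs]
      field_simp
    show c + _ • e₁ + _ • e₂ = x
    rw [hcosθ, hsinθ]
    calc c + α • e₁ + β • e₂ = c + (α • e₁ + β • e₂) := by abel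
    _ = c + (x - c) := by rw [← hrepr]
    _ = x := by abel
  · -- range γ ⊆ sphere ∩ P
    rintro x ⟨θ, rfl⟩
    have hvD : (ρ * Real.cos θ) • e₁ + (ρ * Real.sin θ) • e₂ ∈ D :=
      add_mem (Submodule.smul_mem _ _ he₁D) (Submodule.smul_mem _ _ he₂D)
    have hxP : c + (ρ * Real.cos θ) • e₁ + (ρ * Real.sin θ) • e₂ ∈ P := by
      have := AffineSubspace.vadd_mem_of_mem_direction hvD hcP
      simpa [add_assoc, add_comm, add_left_comm] using this
    refine ⟨?_, hxP⟩
    have hnormv : ‖(ρ * Real.cos θ) • e₁ + (ρ * Real.sin θ) • e₂‖ ^ 2 = ρ ^ 2 := by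
      rw [norm_add_sq_real, real_inner_smul_left, real_inner_smul_right, h12,
        norm_smul, norm_smul, he₁, he₂, Real.norm_eq_abs, Real.norm_eq_abs]
      simp [mul_pow, sq_abs]
      nlinarith [Real.sin_sq_add_cos_sq θ]
    have hx2 : ‖c + (ρ * Real.cos θ) • e₁ + (ρ * Real.sin θ) • e₂‖ ^ 2 = 1 := by
      have h' := hnormsq _ hxP
      have hsub : c + (ρ * Real.cos θ) • e₁ + (ρ * Real.sin θ) • e₂ - c
          = (ρ * Real.cos θ) • e₁ + (ρ * Real.sin θ) • e₂ := by abel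
      rw [hsub, hnormv] at h'
      rw [h', hρsq]; ring
    rw [mem_sphere_iff_norm, sub_zero]
    exact sq_eq_one_of_nonneg hx2 (norm_nonneg _)

lemma range_gamma_infinite (c e₁ e₂ : E) (ρ : ℝ) (hρ : 0 < ρ)
    (he₁ : ‖e₁‖ = 1) (h12 : ⟪e₁, e₂⟫ = 0) :
    (Set.range fun θ : ℝ => c + (ρ * Real.cos θ) • e₁ + (ρ * Real.sin θ) • e₂).Infinite := by
  set γ : ℝ → E := fun θ => c + (ρ * Real.cos θ) • e₁ + (ρ * Real.sin θ) • e₂ with hγ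
  have hinner : ∀ θ, ⟪γ θ - c, e₁⟫ = ρ * Real.cos θ := by
    intro θ
    have : γ θ - c = (ρ * Real.cos θ) • e₁ + (ρ * Real.sin θ) • e₂ := by simp only [hγ]; abel
    rw [this, inner_add_left, real_inner_smul_left, real_inner_smul_left,
      real_inner_self_eq_norm_sq, he₁]
    have h21 : ⟪e₂, e₁⟫ = 0 := by rw [real_inner_comm]; exact h12
    rw [h21]; ring
  have hinj : Set.InjOn γ (Set.Icc 0 Real.pi) := by
    intro θ hθ θ' hθ' h
    apply Real.injOn_cos hθ hθ'
    have h1 := hinner θ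
    have h2 := hinner θ'
    rw [h] at h1
    have : ρ * Real.cos θ = ρ * Real.cos θ' := by rw [← h1, h2]
    exact mul_left_cancel₀ (ne_of_gt hρ) this
  have hIccInf : (Set.Icc (0:ℝ) Real.pi).Infinite := by
    rw [← Set.infinite_coe_iff]
    exact Set.Icc.infinite Real.pi_pos
  exact ((hIccInf.image hinj).mono (Set.image_subset_range γ _))


lemma cap_preconnected (u : E) (hu : ‖u‖ = 1) (ε : ℝ) (hε0 : 0 < ε) (hε1 : ε ≤ 1) :
    IsPreconnected {z : E | ‖z‖ = 1 ∧ dist z u < ε} := by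
  set Bu := {z : E | ‖z‖ = 1 ∧ dist z u < ε} with hBu
  have hdist_sq : ∀ z : E, ‖z‖ = 1 → dist z u ^ 2 = 2 - 2 * ⟪z, u⟫ := by
    intro z hz
    rw [dist_eq_norm, norm_sub_sq_real, hz, hu]
    ring
  have hinner_lb : ∀ z ∈ Bu, 1 - ε ^ 2 / 2 ≤ ⟪z, u⟫ := by
    rintro z ⟨hz1, hzd⟩
    have h1 : dist z u ^ 2 < ε ^ 2 := by
      have := pow_lt_pow_left₀ hzd dist_nonneg (by norm_num : 2 ≠ 0)
      exact this
    rw [hdist_sq z hz1] at h1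
    linarith
  have hpos : ∀ z ∈ Bu, 0 < ⟪z, u⟫ := by
    intro z hz
    have := hinner_lb z hz
    nlinarith
  -- the segment path
  have hkey : ∀ z ∈ Bu, ∃ σ : ℝ → E, ContinuousOn σ (Set.Icc 0 1) ∧ σ 0 = z ∧ σ 1 = u ∧
      ∀ s ∈ Set.Icc (0:ℝ) 1, σ s ∈ Bu := by
    intro z hz
    have hz1 : ‖z‖ = 1 := hz.1
    have hzu : ⟪z, u⟫ ≤ 1 := by
      have := real_inner_le_norm z u
      rw [hz1, hu] at this; linarith
    set g : ℝ → E := fun s => (1 - s) • z + s • u with hg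
    have hginner : ∀ s ∈ Set.Icc (0:ℝ) 1, ⟪z, u⟫ ≤ ⟪g s, u⟫ := by
      rintro s ⟨hs0, hs1⟩
      rw [hg]
      simp only [inner_add_left, real_inner_smul_left]
      rw [real_inner_self_eq_norm_sq, hu]
      nlinarith
    have hgnorm : ∀ s ∈ Set.Icc (0:ℝ) 1, ‖g s‖ ≤ 1 := by
      rintro s ⟨hs0, hs1⟩
      calc ‖g s‖ ≤ ‖(1-s) • z‖ + ‖s • u‖ := norm_add_le _ _
      _ = |1-s| + |s| := by rw [norm_smul, norm_smul, hz1, hu, Real.norm_eq_abs, Real.norm_eq_abs]; ring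
      _ = 1 := by rw [abs_of_nonneg (by linarith), abs_of_nonneg hs0]; ring
    have hgpos : ∀ s ∈ Set.Icc (0:ℝ) 1, 0 < ‖g s‖ := by
      intro s hs
      rcases eq_or_lt_of_le (norm_nonneg (g s)) with h | h
      · exfalso
        have h0 : g s = 0 := by rw [← norm_eq_zero]; exact h.symm
        have := hginner s hs
        rw [h0, inner_zero_left] at this
        exact absurd (lt_of_lt_of_le (hpos z hz) this) (lt_irrefl 0)
      · exact h
    refine ⟨fun s => (‖g s‖)⁻¹ • g s, ?_, ?_, ?_, ?_⟩
    · have hgc : Continuous g := by fun_prop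
      exact ((hgc.norm.continuousOn.inv₀ (fun s hs => ne_of_gt (hgpos s hs))).smul
        hgc.continuousOn)
    · show (‖g 0‖)⁻¹ • g 0 = z
      have h0 : g 0 = z := by rw [hg]; simp
      rw [h0, hz1]; simp
    · show (‖g 1‖)⁻¹ • g 1 = u
      have h1 : g 1 = u := by rw [hg]; simp
      rw [h1, hu]; simp
    · intro s hs
      have hn : ‖(‖g s‖)⁻¹ • g s‖ = 1 := by
        rw [norm_smul, Real.norm_eq_abs, abs_of_pos (inv_pos.2 (hgpos s hs)),
          inv_mul_cancel₀ (ne_of_gt (hgpos s hs))]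
      refine ⟨hn, ?_⟩
      have hinner2 : ⟪z, u⟫ ≤ ⟪(‖g s‖)⁻¹ • g s, u⟫ := by
        rw [real_inner_smul_left]
        have h1 := hginner s hs
        have h2 := hgnorm s hs
        have h3 := hgpos s hs
        have h4 : 0 < ⟪g s, u⟫ := lt_of_lt_of_le (hpos z hz) h1
        calc ⟪z, u⟫ ≤ ⟪g s, u⟫ := h1
        _ ≤ (‖g s‖)⁻¹ * ⟪g s, u⟫ := by
            nlinarith [mul_inv_cancel₀ (ne_of_gt h3), inv_nonneg.2 h3.le,
              mul_nonneg (inv_nonneg.2 h3.le) (sub_nonneg.2 h2)]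
      have hd2 : dist ((‖g s‖)⁻¹ • g s) u ^ 2 ≤ dist z u ^ 2 := by
        rw [hdist_sq _ hn, hdist_sq _ hz1]
        linarith
      have : dist ((‖g s‖)⁻¹ • g s) u ≤ dist z u := by
        rw [← pow_le_pow_iff_left₀ dist_nonneg dist_nonneg (by norm_num : 2 ≠ 0)]
        exact hd2
      exact lt_of_le_of_lt this hz.2
  -- glue the segments at `u`
  apply isPreconnected_of_forall u
  intro z hz
  obtain ⟨σ, hσc, hσ0, hσ1, hσmem⟩ := hkey z hz
  refine ⟨σ '' Set.Icc 0 1, ?_, ?_, ?_, ?_⟩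
  · rintro x ⟨s, hs, rfl⟩; exact hσmem s hs
  · exact ⟨1, ⟨zero_le_one, le_refl 1⟩, hσ1⟩
  · exact ⟨0, ⟨le_refl 0, zero_le_one⟩, hσ0⟩
  · exact isPreconnected_Icc.image σ hσc

lemma not_collinear_of_norm_one {x y z : E} (hx : ‖x‖ = 1) (hy : ‖y‖ = 1) (hz : ‖z‖ = 1)
    (hxy : x ≠ y) (hxz : x ≠ z) (hyz : y ≠ z) : ¬ Collinear ℝ ({x, y, z} : Set E) := by
  intro hcol
  obtain ⟨p₀, v, hv⟩ := (collinear_iff_exists_forall_eq_smul_vadd _).1 hcol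
  obtain ⟨tx, htx⟩ := hv x (by simp)
  obtain ⟨ty, hty⟩ := hv y (by simp)
  obtain ⟨tz, htz⟩ := hv z (by simp)
  rw [vadd_eq_add] at htx hty htz
  have hnorm : ∀ t : ℝ, ‖t • v + p₀‖ ^ 2
      = t ^ 2 * ‖v‖ ^ 2 + 2 * t * ⟪v, p₀⟫ + ‖p₀‖ ^ 2 := by
    intro t
    rw [norm_add_sq_real, real_inner_smul_left, norm_smul, Real.norm_eq_abs]
    rw [mul_pow, sq_abs]
    ring
  have hFx : tx ^ 2 * ‖v‖ ^ 2 + 2 * tx * ⟪v, p₀⟫ + ‖p₀‖ ^ 2 = 1 := by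
    rw [← hnorm, ← htx, hx]; norm_num
  have hFy : ty ^ 2 * ‖v‖ ^ 2 + 2 * ty * ⟪v, p₀⟫ + ‖p₀‖ ^ 2 = 1 := by
    rw [← hnorm, ← hty, hy]; norm_num
  have hFz : tz ^ 2 * ‖v‖ ^ 2 + 2 * tz * ⟪v, p₀⟫ + ‖p₀‖ ^ 2 = 1 := by
    rw [← hnorm, ← htz, hz]; norm_num
  have hv0 : v ≠ 0 := by
    intro h
    apply hxy
    rw [htx, hty, h, smul_zero, smul_zero]
  have htxy : tx ≠ ty := fun h => hxy (by rw [htx, hty, h])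
  have htxz : tx ≠ tz := fun h => hxz (by rw [htx, htz, h])
  have htyz : ty ≠ tz := fun h => hyz (by rw [hty, htz, h])
  have h1 : (tx - ty) * ((tx + ty) * ‖v‖ ^ 2 + 2 * ⟪v, p₀⟫) = 0 := by
    linear_combination hFx - hFy
  have h2 : (tx - tz) * ((tx + tz) * ‖v‖ ^ 2 + 2 * ⟪v, p₀⟫) = 0 := by
    linear_combination hFx - hFz
  have h1' : (tx + ty) * ‖v‖ ^ 2 + 2 * ⟪v, p₀⟫ = 0 :=
    (mul_eq_zero.1 h1).resolve_left (sub_ne_zero.2 htxy)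
  have h2' : (tx + tz) * ‖v‖ ^ 2 + 2 * ⟪v, p₀⟫ = 0 :=
    (mul_eq_zero.1 h2).resolve_left (sub_ne_zero.2 htxz)
  have h3 : (ty - tz) * ‖v‖ ^ 2 = 0 := by linear_combination h1' - h2'
  have h4 : ‖v‖ ^ 2 = 0 :=
    (mul_eq_zero.1 h3).resolve_left (sub_ne_zero.2 htyz)
  exact hv0 (by rwa [pow_eq_zero_iff (by norm_num : 2 ≠ 0), norm_eq_zero] at h4)


lemma exists_setLimsup_point {X : Type*} [MetricSpace X] (A : ℕ → Set X) (F : Set X)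
    (hF : IsCompact F) (hfreq : ∃ᶠ k in Filter.atTop, (A k ∩ F).Nonempty) :
    ∃ w ∈ F, w ∈ setLimsup A := by
  have hsel : ∀ N : ℕ, ∃ k ≥ N, (A k ∩ F).Nonempty := Filter.frequently_atTop.1 hfreq
  choose k hk hne using hsel
  choose x hx using hne
  obtain ⟨w, hwF, φ, hφ, hconv⟩ := hF.tendsto_subseq (fun N => (hx N).2)
  refine ⟨w, hwF, ?_⟩
  rw [setLimsup, Set.mem_iInter]
  intro N
  apply mem_closure_of_tendsto hconv
  rw [Filter.eventually_atTop]
  refine ⟨N, fun j hj => ?_⟩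
  have h1 : (x ∘ φ) j ∈ A (k (φ j)) := (hx (φ j)).1
  have h2 : N ≤ k (φ j) := le_trans hj (le_trans hφ.le_apply (hk (φ j)))
  exact Set.mem_biUnion h2 h1

lemma eq_of_sq_eq_sq' {a b : ℝ} (ha : 0 ≤ a) (hb : 0 ≤ b) (h : a ^ 2 = b ^ 2) : a = b := by
  have h1 : (a - b) * (a + b) = 0 := by linear_combination h
  rcases mul_eq_zero.1 h1 with h2 | h2 <;> linarith

/-- Every circle admits a trigonometric parametrization. -/
lemma isCircle_param {n : ℕ} {C : Set (Euc n)} (hC : IsCircle n C) :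
    ∃ (c e₁ e₂ : Euc n) (ρ : ℝ), 0 < ρ ∧ ‖e₁‖ = 1 ∧ ‖e₂‖ = 1 ∧ ⟪e₁, e₂⟫ = 0 ∧
      C = Set.range (fun θ : ℝ => c + (ρ * Real.cos θ) • e₁ + (ρ * Real.sin θ) • e₂) := by
  obtain ⟨P, h2, rfl, hinf⟩ := hC
  obtain ⟨a, ha, b, hb, hab⟩ := hinf.nontrivial
  have haS : ‖a‖ = 1 := by simpa [unitSphere, mem_sphere_zero_iff_norm] using ha.1
  have hbS : ‖b‖ = 1 := by simpa [unitSphere, mem_sphere_zero_iff_norm] using hb.1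
  exact sphere_inter_plane_param P h2 haS ha.2 hbS hb.2 hab

lemma isCircle_subset_sphere {n : ℕ} {C : Set (Euc n)} (hC : IsCircle n C) :
    C ⊆ unitSphere n := by
  obtain ⟨P, _, rfl, _⟩ := hC; exact Set.inter_subset_left

lemma isCircle_nonempty {n : ℕ} {C : Set (Euc n)} (hC : IsCircle n C) : C.Nonempty := by
  obtain ⟨P, _, rfl, hinf⟩ := hC; exact hinf.nonempty

lemma unitSphere_bounded (n : ℕ) : Bornology.IsBounded (unitSphere n) :=
  Metric.isBounded_sphere

lemma isCircle_diff_ball_preconnected {n : ℕ} {C : Set (Euc n)} (hC : IsCircle n C)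
    (w : Euc n) (δ : ℝ) : IsPreconnected (C \ Metric.ball w δ) := by
  obtain ⟨c, e₁, e₂, ρ, hρ, he₁, he₂, h12, hCeq⟩ := isCircle_param hC
  rw [hCeq]
  exact image_superlevel_preconnected c e₁ e₂ ρ he₁ he₂ h12 w δ

lemma isCircle_preconnected {n : ℕ} {C : Set (Euc n)} (hC : IsCircle n C) :
    IsPreconnected C := by
  have := isCircle_diff_ball_preconnected hC 0 (-1)
  have h : C \ Metric.ball (0 : Euc n) (-1) = C := by
    rw [Metric.ball_eq_empty.2 (by norm_num : (-1:ℝ) ≤ 0), Set.diff_empty]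
  rwa [h] at this

/-- Lemma 4.6: two complementary components force double stability. -/
theorem wkm_doubly_stable {n : ℕ} (Λ : Set (Euc n)) (hΛsub : Λ ⊆ unitSphere n)
    (hΛcl : IsClosed Λ)
    (htwo : ∃ x ∈ unitSphere n \ Λ, ∃ y ∈ unitSphere n \ Λ,
      connectedComponentIn (unitSphere n \ Λ) x ≠
        connectedComponentIn (unitSphere n \ Λ) y) :
    DoublyStable n Λ := by
  intro ξ hξ
  obtain ⟨u, hu, v, hv, hUV⟩ := htwo
  set Ω := unitSphere n \ Λ with hΩ
  have hΛne : Λ.Nonempty := ⟨ξ, hξ⟩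
  have hξS : ‖ξ‖ = 1 := by simpa [unitSphere, mem_sphere_zero_iff_norm] using hΛsub hξ
  have huS : ‖u‖ = 1 := by simpa [unitSphere, mem_sphere_zero_iff_norm] using hu.1
  have hvS : ‖v‖ = 1 := by simpa [unitSphere, mem_sphere_zero_iff_norm] using hv.1
  have huΛ : u ∉ Λ := hu.2
  have hvΛ : v ∉ Λ := hv.2
  have huv : u ≠ v := by rintro rfl; exact hUV rfl
  have hξu : ξ ≠ u := by rintro rfl; exact huΛ hξ
  have hξv : ξ ≠ v := by rintro rfl; exact hvΛ hξ
  -- the circle through ξ, u, v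
  have hcol := not_collinear_of_norm_one hξS huS hvS hξu hξv huv
  have hAI : AffineIndependent ℝ ![ξ, u, v] := affineIndependent_iff_not_collinear_set.2 hcol
  set P := affineSpan ℝ ({ξ, u, v} : Set (Euc n)) with hP
  have hrange : Set.range ![ξ, u, v] = {ξ, u, v} := by
    ext w
    constructor
    · rintro ⟨i, rfl⟩
      fin_cases i <;> simp
    · rintro (rfl | rfl | rfl)
      exacts [⟨0, rfl⟩, ⟨1, rfl⟩, ⟨2, rfl⟩]
  have hdir : Module.finrank ℝ P.direction = 2 := by
    rw [hP, direction_affineSpan]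
    have := hAI.finrank_vectorSpan (by simp : Fintype.card (Fin 3) = 2 + 1)
    rwa [hrange] at this
  have hξP : ξ ∈ P := subset_affineSpan ℝ _ (by simp)
  have huP : u ∈ P := subset_affineSpan ℝ _ (by simp)
  have hvP : v ∈ P := subset_affineSpan ℝ _ (by simp)
  set C := unitSphere n ∩ (P : Set (Euc n)) with hC
  have hξC : ξ ∈ C := ⟨hΛsub hξ, hξP⟩
  have huC : u ∈ C := ⟨hu.1, huP⟩
  have hvC : v ∈ C := ⟨hv.1, hvP⟩
  obtain ⟨c, e₁, e₂, ρ, hρ, he₁, he₂, h12, hCeq⟩ :=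
    sphere_inter_plane_param P hdir hξS hξP huS huP hξu
  have hCeq' : C = Set.range (fun θ : ℝ =>
      c + (ρ * Real.cos θ) • e₁ + (ρ * Real.sin θ) • e₂) := hCeq
  have hCinf : C.Infinite := by
    rw [hCeq']; exact range_gamma_infinite c e₁ e₂ ρ hρ he₁ h12
  have hCcirc : IsCircle n C := ⟨P, hdir, rfl, hCinf⟩
  refine ⟨C, hCcirc, hξC, ?_⟩
  intro Ck hCk hconv
  by_contra hnt
  rw [Set.not_nontrivial_iff] at hnt
  set L := setLimsup (fun k => Ck k ∩ Λ) with hL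
  -- compactness of Λ
  have hΛb : Bornology.IsBounded Λ := (unitSphere_bounded n).subset hΛsub
  have hΛcomp : IsCompact Λ := Metric.isCompact_of_isClosed_isBounded hΛcl hΛb
  -- caps around u and v
  have hru : 0 < infDist u Λ := (hΛcl.notMem_iff_infDist_pos hΛne).1 huΛ
  have hrv : 0 < infDist v Λ := (hΛcl.notMem_iff_infDist_pos hΛne).1 hvΛ
  set εu := min (infDist u Λ / 2) 1 with hεu
  set εv := min (infDist v Λ / 2) 1 with hεv
  have hεu0 : 0 < εu := lt_min (by linarith) one_pos
  have hεv0 : 0 < εv := lt_min (by linarith) one_pos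
  have hεu1 : εu ≤ 1 := min_le_right _ _
  have hεv1 : εv ≤ 1 := min_le_right _ _
  have hcapu : ∀ z : Euc n, ‖z‖ = 1 → dist z u < εu →
      connectedComponentIn Ω u = connectedComponentIn Ω z := by
    intro z hz hzd
    set Bu := {z : Euc n | ‖z‖ = 1 ∧ dist z u < εu} with hBu
    have hBuΩ : Bu ⊆ Ω := by
      rintro y ⟨hy1, hyd⟩
      refine ⟨by simpa [unitSphere, mem_sphere_zero_iff_norm] using hy1, fun hyΛ => ?_⟩
      have h1 : infDist u Λ ≤ dist u y := infDist_le_dist_of_mem hyΛ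
      rw [dist_comm] at h1
      have : εu ≤ infDist u Λ / 2 := min_le_left _ _
      linarith
    have hpre : IsPreconnected Bu := cap_preconnected u huS εu hεu0 hεu1
    have huBu : u ∈ Bu := ⟨huS, by simpa using hεu0⟩
    have hsub := hpre.subset_connectedComponentIn huBu hBuΩ
    exact connectedComponentIn_eq (hsub ⟨hz, hzd⟩)
  have hcapv : ∀ z : Euc n, ‖z‖ = 1 → dist z v < εv →
      connectedComponentIn Ω v = connectedComponentIn Ω z := by
    intro z hz hzd
    set Bv := {z : Euc n | ‖z‖ = 1 ∧ dist z v < εv} with hBv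
    have hBvΩ : Bv ⊆ Ω := by
      rintro y ⟨hy1, hyd⟩
      refine ⟨by simpa [unitSphere, mem_sphere_zero_iff_norm] using hy1, fun hyΛ => ?_⟩
      have h1 : infDist v Λ ≤ dist v y := infDist_le_dist_of_mem hyΛ
      rw [dist_comm] at h1
      have : εv ≤ infDist v Λ / 2 := min_le_left _ _
      linarith
    have hpre : IsPreconnected Bv := cap_preconnected v hvS εv hεv0 hεv1
    have hvBv : v ∈ Bv := ⟨hvS, by simpa using hεv0⟩
    have hsub := hpre.subset_connectedComponentIn hvBv hBvΩ
    exact connectedComponentIn_eq (hsub ⟨hz, hzd⟩)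
  set ε' := min εu εv with hε'
  have hε'0 : 0 < ε' := lt_min hεu0 hεv0
  -- eventually, Hausdorff distance is small
  have hevH : ∀ᶠ k in Filter.atTop, hausdorffDist (Ck k) C < ε' :=
    hconv.eventually (eventually_lt_nhds hε'0)
  -- basic facts about the circles Ck
  have hCkne : ∀ k, (Ck k).Nonempty := fun k => isCircle_nonempty (hCk k)
  have hCkS : ∀ k, Ck k ⊆ unitSphere n := fun k => isCircle_subset_sphere (hCk k)
  have hCkb : ∀ k, Bornology.IsBounded (Ck k) := fun k => (unitSphere_bounded n).subset (hCkS k)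
  have hCb : Bornology.IsBounded C := (unitSphere_bounded n).subset Set.inter_subset_left
  have hCne : C.Nonempty := ⟨ξ, hξC⟩
  have hedist : ∀ k, EMetric.hausdorffEdist (C : Set (Euc n)) (Ck k) ≠ ⊤ := fun k =>
    Metric.hausdorffEdist_ne_top_of_nonempty_of_bounded hCne (hCkne k) hCb (hCkb k)
  -- from small Hausdorff distance, find points of Ck near u and near v
  have hnear : ∀ k, hausdorffDist (Ck k) C < ε' →
      (∃ zu ∈ Ck k, dist u zu < εu) ∧ (∃ zv ∈ Ck k, dist v zv < εv) := by
    intro k hk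
    constructor
    · have h1 : infDist u (Ck k) ≤ hausdorffDist (C : Set (Euc n)) (Ck k) :=
        Metric.infDist_le_hausdorffDist_of_mem huC (hedist k)
      rw [Metric.hausdorffDist_comm] at h1
      have h2 : infDist u (Ck k) < εu := lt_of_le_of_lt h1 (lt_of_lt_of_le hk (min_le_left _ _))
      exact (Metric.infDist_lt_iff (hCkne k)).1 h2
    · have h1 : infDist v (Ck k) ≤ hausdorffDist (C : Set (Euc n)) (Ck k) :=
        Metric.infDist_le_hausdorffDist_of_mem hvC (hedist k)
      rw [Metric.hausdorffDist_comm] at h1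
      have h2 : infDist v (Ck k) < εv := lt_of_le_of_lt h1 (lt_of_lt_of_le hk (min_le_right _ _))
      exact (Metric.infDist_lt_iff (hCkne k)).1 h2
  -- the final contradiction, given a suitable connected subset T of Ω
  have hbridge : ∀ T : Set (Euc n), IsPreconnected T → T ⊆ Ω →
      (∃ zu ∈ T, dist u zu < εu) → (∃ zv ∈ T, dist v zv < εv) → False := by
    rintro T hTpre hTΩ ⟨zu, hzuT, hzud⟩ ⟨zv, hzvT, hzvd⟩
    have hzuS : ‖zu‖ = 1 := by
      have := (hTΩ hzuT).1
      simpa [unitSphere, mem_sphere_zero_iff_norm] using this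
    have hzvS : ‖zv‖ = 1 := by
      have := (hTΩ hzvT).1
      simpa [unitSphere, mem_sphere_zero_iff_norm] using this
    have h1 : connectedComponentIn Ω u = connectedComponentIn Ω zu :=
      hcapu zu hzuS (by rwa [dist_comm])
    have h2 : connectedComponentIn Ω v = connectedComponentIn Ω zv :=
      hcapv zv hzvS (by rwa [dist_comm])
    have h3 : zv ∈ connectedComponentIn Ω zu :=
      hTpre.subset_connectedComponentIn hzuT hTΩ hzvT
    have h4 : connectedComponentIn Ω zu = connectedComponentIn Ω zv :=
      connectedComponentIn_eq h3
    exact hUV (by rw [h1, h4, h2])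
  by_cases hfreq : ∃ᶠ k in Filter.atTop, (Ck k ∩ Λ).Nonempty
  · -- there is a limit point w ∈ L
    obtain ⟨w, hwΛ, hwL⟩ := exists_setLimsup_point (fun k => Ck k ∩ Λ) Λ hΛcomp
      (hfreq.mono fun k ⟨x, hx⟩ => ⟨x, ⟨hx, hx.2⟩⟩)
    set δ := min (infDist u Λ / 2) (infDist v Λ / 2) with hδ
    have hδ0 : 0 < δ := lt_min (by linarith) (by linarith)
    -- eventually all of Ck ∩ Λ is inside ball w δ
    have hev2 : ∀ᶠ k in Filter.atTop, Ck k ∩ Λ ⊆ Metric.ball w δ := by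
      by_contra hcon
      rw [Filter.not_eventually] at hcon
      have hfreq2 : ∃ᶠ k in Filter.atTop, ((Ck k ∩ Λ) ∩ (Λ \ Metric.ball w δ)).Nonempty := by
        refine hcon.mono fun k hk => ?_
        rw [Set.not_subset] at hk
        obtain ⟨x, hx1, hx2⟩ := hk
        exact ⟨x, hx1, hx1.2, hx2⟩
      have hFcl : IsClosed (Λ \ Metric.ball w δ) := hΛcl.inter (Metric.isOpen_ball.isClosed_compl)
      have hFcomp : IsCompact (Λ \ Metric.ball w δ) :=
        Metric.isCompact_of_isClosed_isBounded hFcl (hΛb.subset Set.diff_subset)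
      obtain ⟨w', hw'F, hw'L⟩ := exists_setLimsup_point (fun k => Ck k ∩ Λ) _ hFcomp hfreq2
      have : w' = w := hnt hw'L hwL
      rw [this] at hw'F
      exact hw'F.2 (Metric.mem_ball_self hδ0)
    obtain ⟨k, hk1, hk2⟩ := (hevH.and hev2).exists
    obtain ⟨⟨zu, hzu, hzud⟩, ⟨zv, hzv, hzvd⟩⟩ := hnear k hk1
    -- zu, zv are far from w
    have hwu : infDist u Λ ≤ dist u w := infDist_le_dist_of_mem hwΛ
    have hwv : infDist v Λ ≤ dist v w := infDist_le_dist_of_mem hwΛ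
    have hzuball : zu ∉ Metric.ball w δ := by
      rw [Metric.mem_ball]
      intro h
      have h1 : dist u w ≤ dist u zu + dist zu w := dist_triangle _ _ _
      have h2 : εu ≤ infDist u Λ / 2 := min_le_left _ _
      have h3 : δ ≤ infDist u Λ / 2 := min_le_left _ _
      linarith
    have hzvball : zv ∉ Metric.ball w δ := by
      rw [Metric.mem_ball]
      intro h
      have h1 : dist v w ≤ dist v zv + dist zv w := dist_triangle _ _ _
      have h2 : εv ≤ infDist v Λ / 2 := min_le_left _ _
      have h3 : δ ≤ infDist v Λ / 2 := min_le_right _ _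
      linarith
    refine hbridge (Ck k \ Metric.ball w δ)
      (isCircle_diff_ball_preconnected (hCk k) w δ) ?_ ⟨zu, ⟨hzu, hzuball⟩, hzud⟩
      ⟨zv, ⟨hzv, hzvball⟩, hzvd⟩
    rintro x ⟨hx1, hx2⟩
    refine ⟨(hCkS k) hx1, fun hxΛ => hx2 (hk2 ⟨hx1, hxΛ⟩)⟩
  · -- eventually Ck ∩ Λ = ∅
    rw [Filter.not_frequently] at hfreq
    have hfreq' : ∀ᶠ k in Filter.atTop, Ck k ∩ Λ = ∅ := by
      refine hfreq.mono fun k hk => ?_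
      rwa [Set.not_nonempty_iff_eq_empty] at hk
    obtain ⟨k, hk1, hk2⟩ := (hevH.and hfreq').exists
    obtain ⟨⟨zu, hzu, hzud⟩, ⟨zv, hzv, hzvd⟩⟩ := hnear k hk1
    refine hbridge (Ck k) (isCircle_preconnected (hCk k)) ?_ ⟨zu, hzu, hzud⟩ ⟨zv, hzv, hzvd⟩
    intro x hx
    refine ⟨(hCkS k) hx, fun hxΛ => ?_⟩
    have : x ∈ Ck k ∩ Λ := ⟨hx, hxΛ⟩
    rw [hk2] at this
    exact this

end Helpers

local notation "⟪" x ", " y "⟫" => inner (𝕜 := ℝ) x y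

set_option maxHeartbeats 2000000 in
/-- Combination of Lemma 4.6 and Theorem 4.1: if `Ω = S^n \ Λ` satisfies WKM and has
at least two components and `f : Λ → S^m` is continuous injective with `f(Λ) ≠ S^m`,
then there are a circle `C`, a codimension-one sphere `S` and `ξ ∈ Λ ∩ C` with
`f ξ ∈ S` such that no sequence of pairs `(C_k, S_k)` with `C_k ∩ Λ ≠ ∅` and
`f(C_k ∩ Λ) ⊆ S_k` converges to `(C, S)`. -/
theorem no_dense_orbit_of_WKM
    (n m : ℕ) (hn : 2 ≤ n) (hm : 2 ≤ m)
    (Λ : Set (Euc n)) (hne : Λ.Nonempty) (hΛsub : Λ ⊆ unitSphere n)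
    (hΛcl : IsClosed Λ) (hWKM : WKM (unitSphere n \ Λ))
    (htwo : ∃ x ∈ unitSphere n \ Λ, ∃ y ∈ unitSphere n \ Λ,
      connectedComponentIn (unitSphere n \ Λ) x ≠
        connectedComponentIn (unitSphere n \ Λ) y)
    (f : Euc n → Euc m) (hfc : ContinuousOn f Λ) (hfi : Set.InjOn f Λ)
    (hfm : Set.MapsTo f Λ (unitSphere m)) (hfne : f '' Λ ≠ unitSphere m) :
    ∃ (C : Set (Euc n)) (S : Set (Euc m)) (ξ : Euc n),
      IsCircle n C ∧ IsCodimOneSphere m S ∧ ξ ∈ Λ ∧ ξ ∈ C ∧ f ξ ∈ S ∧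
      ¬ ∃ (Ck : ℕ → Set (Euc n)) (Sk : ℕ → Set (Euc m)),
          (∀ k, IsCircle n (Ck k)) ∧ (∀ k, (Ck k ∩ Λ).Nonempty) ∧
          (∀ k, IsCodimOneSphere m (Sk k)) ∧ (∀ k, f '' (Ck k ∩ Λ) ⊆ Sk k) ∧
          SetsConvergeTo Ck C ∧ SetsConvergeTo Sk S := by
  have hds : DoublyStable n Λ := wkm_doubly_stable Λ hΛsub hΛcl htwo
  -- Λ has at least two points
  have hΛnt : Λ.Nontrivial := by
    obtain ⟨ξ₀, hξ₀⟩ := hne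
    obtain ⟨C₀, hC₀, _, hprop₀⟩ := hds ξ₀ hξ₀
    have hconv₀ : SetsConvergeTo (fun _ : ℕ => C₀) C₀ := by
      rw [SetsConvergeTo]
      simp only [Metric.hausdorffDist_self_zero]
      exact tendsto_const_nhds
    have h := hprop₀ (fun _ => C₀) (fun _ => hC₀) hconv₀
    refine h.mono ?_
    intro x hx
    have h0 := Set.mem_iInter.1 hx 0
    have hsub2 : (⋃ k ≥ (0:ℕ), C₀ ∩ Λ) ⊆ Λ := by
      intro y hy
      obtain ⟨k, _, hy2⟩ := Set.mem_iUnion₂.1 hy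
      exact hy2.2
    have := closure_mono hsub2 h0
    rwa [hΛcl.closure_eq] at this
  -- the image compact set and the omitted point q
  have hΛb : Bornology.IsBounded Λ := (unitSphere_bounded n).subset hΛsub
  have hΛcomp : IsCompact Λ := Metric.isCompact_of_isClosed_isBounded hΛcl hΛb
  have himg_comp : IsCompact (f '' Λ) := hΛcomp.image_of_continuousOn hfc
  have himg_ne : (f '' Λ).Nonempty := hne.image f
  have himg_cl : IsClosed (f '' Λ) := himg_comp.isClosed
  obtain ⟨q, hqS, hqK⟩ : ∃ q ∈ unitSphere m, q ∉ f '' Λ := by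
    by_contra h
    push_neg at h
    exact hfne (Set.Subset.antisymm (Set.image_subset_iff.2 hfm) h)
  have hqnorm : ‖q‖ = 1 := by simpa [unitSphere, mem_sphere_zero_iff_norm] using hqS
  set r := infDist q (f '' Λ) with hr
  have hr0 : 0 < r := (himg_cl.notMem_iff_infDist_pos himg_ne).1 hqK
  obtain ⟨p, hpK, hrp⟩ := himg_comp.exists_infDist_eq_dist himg_ne q
  obtain ⟨ξ, hξΛ, hfξ⟩ := hpK
  have hpS : ‖p‖ = 1 := by
    have := hfm hξΛ
    rw [hfξ] at this
    simpa [unitSphere, mem_sphere_zero_iff_norm] using this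
  have hpK' : p ∈ f '' Λ := ⟨ξ, hξΛ, hfξ⟩
  have hrdist : r = dist q p := hrp
  -- r < 2
  have hr2 : r < 2 := by
    rcases lt_or_ge r 2 with h | h
    · exact h
    exfalso
    have hall : ∀ y ∈ f '' Λ, y = -q := by
      intro y hy
      have hynorm : ‖y‖ = 1 := by
        obtain ⟨x, hxΛ, rfl⟩ := hy
        simpa [unitSphere, mem_sphere_zero_iff_norm] using hfm hxΛ
      have h1 : r ≤ dist q y := hr ▸ infDist_le_dist_of_mem hy
      have h2 : dist q y ≤ 2 := by
        rw [dist_eq_norm]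
        calc ‖q - y‖ ≤ ‖q‖ + ‖y‖ := norm_sub_le _ _
        _ = 2 := by rw [hqnorm, hynorm]; norm_num
      have h3 : dist q y = 2 := le_antisymm h2 (le_trans h h1)
      have h4 : ‖q + -y‖ = ‖q‖ + ‖-y‖ := by
        rw [← sub_eq_add_neg, ← dist_eq_norm, h3, hqnorm, norm_neg, hynorm]; norm_num
      have h5 : SameRay ℝ q (-y) := sameRay_iff_norm_add.2 h4
      have h6 := h5.norm_smul_eq
      rw [hqnorm, norm_neg, hynorm, one_smul, one_smul] at h6
      rw [← h6, neg_neg]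
    obtain ⟨a, haΛ, b, hbΛ, hab⟩ := hΛnt
    exact hab (hfi haΛ hbΛ (by rw [hall _ ⟨a, haΛ, rfl⟩, hall _ ⟨b, hbΛ, rfl⟩]))
  -- the midpoint q' and the sphere S
  set q' : Euc m := (2:ℝ)⁻¹ • (p + q) with hq'
  have hpq : ‖p - q‖ = r := by rw [hrdist, dist_eq_norm, ← norm_neg]; congr 1; abel
  have hq'normsq : ‖q'‖ ^ 2 = 1 - r ^ 2 / 4 := by
    have h1 : ‖q'‖ ^ 2 = (‖p‖^2 + 2*⟪p,q⟫ + ‖q‖^2)/4 := by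
      rw [hq', norm_smul, Real.norm_eq_abs]
      rw [mul_pow, sq_abs, norm_add_sq_real]
      norm_num
      ring
    have h2 : r ^ 2 = ‖p‖^2 - 2*⟪p,q⟫ + ‖q‖^2 := by
      rw [← hpq, norm_sub_sq_real]
    rw [h1, h2, hpS, hqnorm]
    ring
  have hq'0 : q' ≠ 0 := by
    intro h
    rw [h, norm_zero] at hq'normsq
    nlinarith
  have hpq' : ‖p - q'‖ = r/2 := by
    have h1 : p - q' = (2:ℝ)⁻¹ • (p - q) := by
      rw [hq']
      rw [smul_sub, smul_add]
      module
    rw [h1, norm_smul, Real.norm_eq_abs, hpq]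
    rw [abs_of_nonneg (by norm_num : (0:ℝ) ≤ 2⁻¹)]
    ring
  have hq'q : ‖q' - q‖ = r/2 := by
    have h1 : q' - q = (2:ℝ)⁻¹ • (p - q) := by
      rw [hq', smul_sub, smul_add]
      module
    rw [h1, norm_smul, Real.norm_eq_abs, hpq]
    rw [abs_of_nonneg (by norm_num : (0:ℝ) ≤ 2⁻¹)]
    ring
  -- the hyperplane H
  set W : Submodule ℝ (Euc m) := (ℝ ∙ q')ᗮ with hW
  set H : AffineSubspace ℝ (Euc m) := AffineSubspace.mk' q' W with hH
  have hHdir : Module.finrank ℝ H.direction = m := by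
    rw [hH, AffineSubspace.direction_mk', hW]
    have h1 := Submodule.finrank_add_finrank_orthogonal (𝕜 := ℝ) (ℝ ∙ q')
    rw [finrank_span_singleton hq'0, finrank_euclideanSpace_fin] at h1
    omega
  have hHmem : ∀ y : Euc m, y ∈ H ↔ ⟪q', y - q'⟫ = 0 := by
    intro y
    rw [hH, AffineSubspace.mem_mk', hW]
    rw [Submodule.mem_orthogonal_singleton_iff_inner_right]
    rfl
  -- characterization of S := sphere ∩ H
  set S : Set (Euc m) := unitSphere m ∩ (H : Set (Euc m)) with hS
  have hSchar : ∀ y : Euc m, y ∈ S ↔ (‖y‖ = 1 ∧ ‖y - q'‖ = r/2) := by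
    intro y
    rw [hS, Set.mem_inter_iff]
    constructor
    · rintro ⟨hy1, hy2⟩
      have hynorm : ‖y‖ = 1 := by simpa [unitSphere, mem_sphere_zero_iff_norm] using hy1
      refine ⟨hynorm, ?_⟩
      have h1 : ⟪q', y - q'⟫ = 0 := (hHmem y).1 hy2
      have h2 : ‖y - q'‖^2 = ‖y‖^2 - 2*⟪y,q'⟫ + ‖q'‖^2 := norm_sub_sq_real y q'
      have h3 : ⟪q', y⟫ = ‖q'‖^2 := by
        have := h1
        rw [inner_sub_right, real_inner_self_eq_norm_sq] at this
        linarith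
      have h4 : ‖y - q'‖^2 = (r/2)^2 := by
        rw [h2, hynorm, real_inner_comm q' y, h3, hq'normsq]
        ring
      exact eq_of_sq_eq_sq' (norm_nonneg _) (by linarith) h4
    · rintro ⟨hy1, hy2⟩
      constructor
      · simpa [unitSphere, mem_sphere_zero_iff_norm] using hy1
      · have h2 : ‖y - q'‖^2 = ‖y‖^2 - 2*⟪y,q'⟫ + ‖q'‖^2 := norm_sub_sq_real y q'
        have h4 : ‖y - q'‖^2 = (r/2)^2 := by rw [hy2]
        rw [hy1, h4] at h2
        have hgoal : ⟪q', y - q'⟫ = 0 := by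
          rw [inner_sub_right, real_inner_self_eq_norm_sq]
          rw [real_inner_comm y q']
          nlinarith [hq'normsq]
        exact (hHmem y).2 hgoal
  have hpmem : p ∈ S := (hSchar p).2 ⟨hpS, hpq'⟩
  -- S is infinite
  have hSinf : S.Infinite := by
    have hWfin : Module.finrank ℝ W = m := by
      rw [hW]
      have h1 := Submodule.finrank_add_finrank_orthogonal (𝕜 := ℝ) (ℝ ∙ q')
      rw [finrank_span_singleton hq'0, finrank_euclideanSpace_fin] at h1
      omega
    set bW := (stdOrthonormalBasis ℝ W).reindex (finCongr hWfin) with hbW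
    have hm0 : 0 < m := by omega
    have hm1 : 1 < m := by omega
    set e₁ : Euc m := (bW ⟨0, hm0⟩ : Euc m) with he₁def
    set e₂ : Euc m := (bW ⟨1, hm1⟩ : Euc m) with he₂def
    have hon := bW.orthonormal
    have he₁ : ‖e₁‖ = 1 := by
      have := hon.1 ⟨0, hm0⟩; rw [he₁def, Submodule.norm_coe]; exact this
    have he₂ : ‖e₂‖ = 1 := by
      have := hon.1 ⟨1, hm1⟩; rw [he₂def, Submodule.norm_coe]; exact this
    have h12 : ⟪e₁, e₂⟫ = 0 := by
      have hne01 : (⟨0, hm0⟩ : Fin m) ≠ ⟨1, hm1⟩ := by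
        intro h; exact absurd (congrArg Fin.val h) (by norm_num)
      have := hon.2 hne01
      rw [he₁def, he₂def, ← Submodule.coe_inner]
      exact this
    have he₁W : e₁ ∈ W := (bW ⟨0, hm0⟩).2
    have he₂W : e₂ ∈ W := (bW ⟨1, hm1⟩).2
    have hq'e₁ : ⟪q', e₁⟫ = 0 :=
      Submodule.mem_orthogonal_singleton_iff_inner_right.1 he₁W
    have hq'e₂ : ⟪q', e₂⟫ = 0 :=
      Submodule.mem_orthogonal_singleton_iff_inner_right.1 he₂W
    set ρ : ℝ := r/2 with hρdef
    have hρ0 : 0 < ρ := by rw [hρdef]; linarith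
    have hsub : (Set.range fun θ : ℝ =>
        q' + (ρ * Real.cos θ) • e₁ + (ρ * Real.sin θ) • e₂) ⊆ S := by
      rintro x ⟨θ, rfl⟩
      have hnormx : ‖q' + (ρ * Real.cos θ) • e₁ + (ρ * Real.sin θ) • e₂ - q'‖ ^ 2 = ρ^2 := by
        have h6 := gamma_norm_sq q' e₁ e₂ q' ρ θ he₁ he₂ h12
        simp only [sub_self, norm_zero, inner_zero_left, mul_zero, zero_mul, add_zero,
          zero_add] at h6
        rw [h6]
        ring
      have hnx2 : ‖q' + (ρ * Real.cos θ) • e₁ + (ρ * Real.sin θ) • e₂‖ ^ 2 = 1 := by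
        have h6 := gamma_norm_sq q' e₁ e₂ 0 ρ θ he₁ he₂ h12
        simp only [sub_zero] at h6
        rw [hq'e₁, hq'e₂] at h6
        rw [h6, hq'normsq, hρdef]
        ring
      rw [hSchar]
      refine ⟨sq_eq_one_of_nonneg hnx2 (norm_nonneg _), ?_⟩
      exact eq_of_sq_eq_sq' (norm_nonneg _) (by linarith) (by rw [hnormx, hρdef])
    exact (range_gamma_infinite q' e₁ e₂ ρ hρ0 he₁ h12).mono hsub
  have hScod : IsCodimOneSphere m S := ⟨H, hHdir, rfl, hSinf⟩
  have hScl : IsClosed S := by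
    rw [hS]
    exact Metric.isClosed_sphere.inter (AffineSubspace.closed_of_finiteDimensional H)
  have hSb : Bornology.IsBounded S := (unitSphere_bounded m).subset Set.inter_subset_left
  have hSne : S.Nonempty := ⟨p, hpmem⟩
  -- the circle C through ξ
  obtain ⟨C, hCcirc, hξC, hCprop⟩ := hds ξ hξΛ
  refine ⟨C, S, ξ, hCcirc, hScod, hξΛ, hξC, by rw [hfξ]; exact hpmem, ?_⟩
  -- no converging sequence of pairs
  rintro ⟨Ck, Sk, hCk, hCkΛ, hSk, hfCk, hconvC, hconvS⟩
  obtain ⟨a, haL, b, hbL, hab⟩ := hCprop Ck hCk hconvC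
  -- every limsup point lands in Λ with image in S
  have key : ∀ x, x ∈ setLimsup (fun k => Ck k ∩ Λ) → x ∈ Λ ∧ f x ∈ S := by
    intro x hx
    have hxΛ : x ∈ Λ := by
      have h0 := Set.mem_iInter.1 hx 0
      have hsub2 : (⋃ k ≥ (0:ℕ), Ck k ∩ Λ) ⊆ Λ := by
        intro y hy
        obtain ⟨k, _, hy2⟩ := Set.mem_iUnion₂.1 hy
        exact hy2.2
      have := closure_mono hsub2 h0
      rwa [hΛcl.closure_eq] at this
    refine ⟨hxΛ, ?_⟩
    -- extract an approximating sequence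
    have hsel : ∀ j : ℕ, ∃ y, (∃ k ≥ j, y ∈ Ck k ∩ Λ) ∧ dist x y < 1/(j+1) := by
      intro j
      have hj := Set.mem_iInter.1 hx j
      have hpos : (0:ℝ) < 1/(j+1) := by positivity
      obtain ⟨y, hy1, hy2⟩ := Metric.mem_closure_iff.1 hj _ hpos
      obtain ⟨k, hk1, hk2⟩ := Set.mem_iUnion₂.1 hy1
      exact ⟨y, ⟨k, hk1, hk2⟩, hy2⟩
    choose y hy hydist using hsel
    choose k hk hymem using hy
    have hytend : Filter.Tendsto y Filter.atTop (nhds x) := by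
      rw [tendsto_iff_dist_tendsto_zero]
      have hb : ∀ j : ℕ, dist (y j) x ≤ 1/(j+1) := fun j => by
        rw [dist_comm]; exact (hydist j).le
      exact squeeze_zero (fun j => dist_nonneg) hb tendsto_one_div_add_atTop_nhds_zero_nat
    have hfy : Filter.Tendsto (fun j => f (y j)) Filter.atTop (nhds (f x)) := by
      have hcw : ContinuousWithinAt f Λ x := hfc x hxΛ
      exact hcw.tendsto.comp (tendsto_nhdsWithin_of_tendsto_nhds_of_eventually_within y hytend
        (Filter.Eventually.of_forall fun j => (hymem j).2))
    have hSkb : ∀ j, Bornology.IsBounded (Sk j) := by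
      intro j
      obtain ⟨Hj, _, hSkeq, _⟩ := hSk j
      rw [hSkeq]
      exact (unitSphere_bounded m).subset Set.inter_subset_left
    have hSkne : ∀ j, (Sk j).Nonempty := by
      intro j
      obtain ⟨Hj, _, hSkeq, hinf⟩ := hSk j
      exact hinf.nonempty
    have hedist : ∀ j, EMetric.hausdorffEdist (Sk j) S ≠ ⊤ := fun j =>
      Metric.hausdorffEdist_ne_top_of_nonempty_of_bounded (hSkne j) hSne (hSkb j) hSb
    have hbound : ∀ j, infDist (f x) S ≤ dist (f x) (f (y j)) + hausdorffDist (Sk (k j)) S := by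
      intro j
      have hfyS : f (y j) ∈ Sk (k j) := hfCk (k j) ⟨y j, hymem j, rfl⟩
      have h1 : infDist (f x) S ≤ infDist (f (y j)) S + dist (f x) (f (y j)) :=
        Metric.infDist_le_infDist_add_dist
      have h2 : infDist (f (y j)) S ≤ hausdorffDist (Sk (k j)) S :=
        Metric.infDist_le_hausdorffDist_of_mem hfyS (hedist (k j))
      linarith
    have htends : Filter.Tendsto
        (fun j => dist (f x) (f (y j)) + hausdorffDist (Sk (k j)) S)
        Filter.atTop (nhds 0) := by
      have h1 : Filter.Tendsto (fun j => dist (f x) (f (y j))) Filter.atTop (nhds 0) := by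
        rw [tendsto_iff_dist_tendsto_zero] at hfy
        convert hfy using 2 with j
        rw [dist_comm]
      have hktend : Filter.Tendsto k Filter.atTop Filter.atTop :=
        Filter.tendsto_atTop_mono hk Filter.tendsto_id
      have h2 : Filter.Tendsto (fun j => hausdorffDist (Sk (k j)) S) Filter.atTop (nhds 0) :=
        hconvS.comp hktend
      have := h1.add h2
      rwa [add_zero] at this
    have hle0 : infDist (f x) S ≤ 0 := ge_of_tendsto' htends hbound
    have h0 : infDist (f x) S = 0 := le_antisymm hle0 Metric.infDist_nonneg
    exact (hScl.mem_iff_infDist_zero hSne).2 h0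
  -- uniqueness of the contact point
  have huniq : ∀ x, x ∈ Λ → f x ∈ S → f x = p := by
    intro x hxΛ hfxS
    set z := f x with hz
    obtain ⟨hz1, hz2⟩ := (hSchar z).1 hfxS
    have h2 : r ≤ dist q z := hr ▸ infDist_le_dist_of_mem ⟨x, hxΛ, rfl⟩
    have h3 : ‖z - q‖ ≤ r := by
      calc ‖z - q‖ = ‖(z - q') + (q' - q)‖ := by congr 1; abel
      _ ≤ ‖z - q'‖ + ‖q' - q‖ := norm_add_le _ _
      _ = r := by rw [hz2, hq'q]; ring
    have h4 : ‖z - q‖ = r := by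
      have : dist q z = ‖z - q‖ := by rw [dist_eq_norm, ← norm_neg]; congr 1; abel
      rw [this] at h2
      exact le_antisymm h3 h2
    have h5 : ‖(z - q') + (q' - q)‖ = ‖z - q'‖ + ‖q' - q‖ := by
      rw [show (z - q') + (q' - q) = z - q by abel, h4, hz2, hq'q]
      ring
    have h6 : SameRay ℝ (z - q') (q' - q) := sameRay_iff_norm_add.2 h5
    have h7 := h6.norm_smul_eq
    rw [hz2, hq'q] at h7
    have h8 : z - q' = q' - q := by
      have hr2ne : (r/2 : ℝ) ≠ 0 := by positivity
      exact (smul_right_injective (Euc m) hr2ne h7).symm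
    have h9 : z = q' + (q' - q) := by rw [← h8]; abel
    rw [h9, hq']
    module
  have hfa : f a = p := huniq a (key a haL).1 (key a haL).2
  have hfb : f b = p := huniq b (key b hbL).1 (key b hbL).2
  exact hab (hfi (key a haL).1 (key b hbL).1 (by rw [hfa, hfb]))
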